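/- Let Λ be a finite set, and let E₁, …, E₉ be the nine edges of the 18-ray Kochen–Specker hypergraph. Let w : {1,…,18} → (Λ → [0,1]) be a measurement-noncontextual assignment of response functions satisfying Σ_{κ∈E_i} w_κ(λ) = 1 for every i ∈ {1,…,9} and every λ ∈ Λ. For each i ∈ {1,…,9} and each κ ∈ E_i, let μ_{i,κ} : Λ → [0,1] be a probability distribution (Σ_λ μ_{i,κ}(λ) = 1), and suppose there is a single distribution ν on Λ such that (1/4) Σ_{κ∈E_i} μ_{i,κ} = ν for every i (preparation noncontextuality applied to the operational equivalence of the nine uniform ensembles of preparations). Then the average predictability A := (1/36) Σ_{i=1}^{9} Σ_{κ∈E_i} Σ_{λ∈Λ} w_κ(λ) μ_{i,κ}(λ) satisfies A ≤ 5/6. -/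
import Mathlib


open scoped BigOperators

/-- The nine edges of the 18-ray Kochen–Specker hypergraph of Cabello et al.
(vertices `0,…,17` correspond to rays `1,…,18`). -/
def edges18 : Fin 9 → Finset (Fin 18) :=
  ![{0, 1, 2, 3}, {3, 4, 5, 6}, {6, 7, 8, 9}, {9, 10, 11, 12}, {12, 13, 14, 15},
    {15, 16, 17, 0}, {17, 1, 8, 10}, {2, 4, 11, 13}, {5, 7, 14, 16}]

/-- **The noncontextuality inequality for the 18-ray Kochen–Specker construction.** For any
measurement-noncontextual assignment `w` of response functions to the 18 equivalence classes
of measurement events, normalized on each of the nine measurements, and any preparation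
distributions `μ i κ` whose nine uniform ensemble averages are all equal to a single
distribution `ν` (preparation noncontextuality), the average predictability `A` is at most
`5/6`. -/
lemma edges18_two : ∀ v : Fin 18, (Finset.univ.filter (fun i => v ∈ edges18 i)).card = 2 := by
  decide

lemma other_spec : ∀ (u : Fin 18) (i : Fin 9), u ∈ edges18 i →
    ∃ j, j ≠ i ∧ u ∈ edges18 j ∧ ∀ k, u ∈ edges18 k → k = i ∨ k = j := by decide

lemma edges18_card : ∀ i : Fin 9, (edges18 i).card = 4 := by decide

lemma edges18_ne : ∀ i : Fin 9, (edges18 i).Nonempty := by decide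

lemma pair_le (w : Fin 18 → ℝ) (h0 : ∀ v, 0 ≤ w v)
    (hnorm : ∀ i, ∑ κ ∈ edges18 i, w κ = 1)
    {u v : Fin 18} {j : Fin 9} (hu : u ∈ edges18 j) (hv : v ∈ edges18 j) (huv : u ≠ v) :
    w u + w v ≤ 1 := by
  have hsub : ({u, v} : Finset (Fin 18)) ⊆ edges18 j := by
    intro x hx
    rcases Finset.mem_insert.mp hx with h | h
    · exact h ▸ hu
    · exact (Finset.mem_singleton.mp h) ▸ hv
  have h := Finset.sum_le_sum_of_subset_of_nonneg hsub (fun x _ _ => h0 x)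
  rwa [Finset.sum_pair huv, hnorm j] at h

lemma key (w : Fin 18 → ℝ) (h0 : ∀ v, 0 ≤ w v) (h1 : ∀ v, w v ≤ 1)
    (hnorm : ∀ i, ∑ κ ∈ edges18 i, w κ = 1)
    (s : Fin 9 → Fin 18) (hs : ∀ i, s i ∈ edges18 i)
    (hmax : ∀ i, ∀ v ∈ edges18 i, w v ≤ w (s i)) :
    ∑ i, w (s i) ≤ 15 / 2 := by
  classical
  set m : Fin 18 → ℕ := fun v => (Finset.univ.filter (fun i => s i = v)).card with hm
  have hm2 : ∀ v, m v ≤ 2 := by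
    intro v
    calc m v ≤ (Finset.univ.filter (fun i => v ∈ edges18 i)).card := by
          apply Finset.card_le_card
          intro i hi
          rw [Finset.mem_filter] at hi ⊢
          exact ⟨hi.1, hi.2 ▸ hs i⟩
      _ = 2 := edges18_two v
  have hsum : ∑ v, m v = 9 := by
    have h := Finset.card_eq_sum_card_fiberwise
      (f := s) (s := (Finset.univ : Finset (Fin 9))) (t := (Finset.univ : Finset (Fin 18)))
      (fun i _ => Finset.mem_univ (s i))
    simpa using h.symm
  set L : Finset (Fin 18) := Finset.univ.filter (fun v => m v = 1) with hL
  -- uniqueness of chooser for lonely vertices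
  have lonely : ∀ x, m x = 1 → ∀ i, s i = x → w x ≤ 1 / 2 := by
    intro x hx i hsi
    obtain ⟨j, hji, hxj, _⟩ := other_spec x i (hsi ▸ hs i)
    have hsjx : s j ≠ x := by
      intro h
      exact hji (Finset.card_le_one.mp hx.le j
        (Finset.mem_filter.mpr ⟨Finset.mem_univ _, h⟩) i
        (Finset.mem_filter.mpr ⟨Finset.mem_univ _, hsi⟩))
    have hle : w x ≤ w (s j) := hmax j x hxj
    have hp : w x + w (s j) ≤ 1 := pair_le w h0 hnorm hxj (hs j) (Ne.symm hsjx)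
    linarith
  -- parity: L.card is odd
  have hLodd : L.card % 2 = 1 := by
    have hsplit := Finset.sum_filter_add_sum_filter_not Finset.univ (fun v => m v = 1) m
    have hLsum : ∑ v ∈ L, m v = L.card := by
      rw [show ∑ v ∈ L, m v = ∑ v ∈ L, 1 from
        Finset.sum_congr rfl (fun v hv => (Finset.mem_filter.mp hv).2)]
      simp
    have heven : 2 ∣ ∑ v ∈ Finset.univ.filter (fun v => ¬ m v = 1), m v := by
      apply Finset.dvd_sum
      intro v hv
      have h2 := hm2 v
      have hne := (Finset.mem_filter.mp hv).2
      omega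
    obtain ⟨k, hk⟩ := heven
    rw [hLsum, hk] at hsplit
    rw [hsum] at hsplit
    omega
  rcases Nat.lt_or_ge L.card 3 with hc | hc
  · -- L.card = 1 case
    have hc1 : L.card = 1 := by omega
    obtain ⟨v0, hv0⟩ := Finset.card_eq_one.mp hc1
    have hmv0 : m v0 = 1 := by
      have : v0 ∈ L := hv0 ▸ Finset.mem_singleton_self v0
      exact (Finset.mem_filter.mp this).2
    have hfil : (Finset.univ.filter (fun i => s i = v0)).Nonempty := by
      rw [← Finset.card_pos]
      show 0 < m v0
      omega
    obtain ⟨i0, hi0⟩ := hfil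
    have hsi0 : s i0 = v0 := (Finset.mem_filter.mp hi0).2
    have hv0half : w v0 ≤ 1 / 2 := lonely v0 hmv0 i0 hsi0
    -- slack identity
    have hid : ∀ i, w (s i) = 1 - ∑ v ∈ (edges18 i).erase (s i), w v := by
      intro i
      have h := Finset.add_sum_erase (edges18 i) w (hs i)
      rw [hnorm i] at h
      linarith
    have htot : ∑ i, w (s i) = 9 - ∑ i, ∑ v ∈ (edges18 i).erase (s i), w v := by
      rw [Finset.sum_congr rfl (fun i _ => hid i), Finset.sum_sub_distrib]
      simp
    -- slack of i0
    have hslack0 : ∑ v ∈ (edges18 i0).erase (s i0), w v = 1 - w v0 := by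
      have := hid i0
      rw [hsi0] at this ⊢
      linarith
    -- remaining slack ≥ 1
    have hrest : (1 : ℝ) ≤ ∑ j ∈ Finset.univ.erase i0, ∑ v ∈ (edges18 j).erase (s j), w v := by
      have hstep1 : ∀ j ∈ Finset.univ.erase i0,
          (∑ u ∈ edges18 i0, if u ∈ (edges18 j).erase (s j) then w u else 0)
            ≤ ∑ v ∈ (edges18 j).erase (s j), w v := by
        intro j _
        rw [Finset.sum_ite_mem]
        apply Finset.sum_le_sum_of_subset_of_nonneg (Finset.inter_subset_right)
        exact fun x _ _ => h0 x
      have hstep2 : (1 : ℝ) ≤ ∑ j ∈ Finset.univ.erase i0,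
          ∑ u ∈ edges18 i0, if u ∈ (edges18 j).erase (s j) then w u else 0 := by
        rw [Finset.sum_comm]
        have hper : ∀ u ∈ edges18 i0,
            w u ≤ ∑ j ∈ Finset.univ.erase i0, if u ∈ (edges18 j).erase (s j) then w u else 0 := by
          intro u hu
          obtain ⟨j, hji0, huj, huniq⟩ := other_spec u i0 hu
          have hsju : s j ≠ u := by
            intro hsj
            by_cases hcase : u = v0
            · subst hcase
              have : j = i0 := Finset.card_le_one.mp hmv0.le j
                (Finset.mem_filter.mpr ⟨Finset.mem_univ _, hsj⟩) i0 hi0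
              exact hji0 this
            · -- m u ≥ 1 and u ∉ L so m u = 2, forcing s i0 = u
              have hmu1 : 1 ≤ m u := Finset.card_pos.mpr
                ⟨j, Finset.mem_filter.mpr ⟨Finset.mem_univ _, hsj⟩⟩
              have hmune : m u ≠ 1 := by
                intro h
                have : u ∈ L := Finset.mem_filter.mpr ⟨Finset.mem_univ _, h⟩
                rw [hv0] at this
                exact hcase (Finset.mem_singleton.mp this)
              have hmu2 : m u = 2 := by have := hm2 u; omega
              have hsubfil : (Finset.univ.filter (fun k => s k = u)) ⊆ {i0, j} := by
                intro k hk
                have hsk := (Finset.mem_filter.mp hk).2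
                rcases huniq k (hsk ▸ hs k) with h | h
                · exact Finset.mem_insert.mpr (Or.inl h)
                · exact Finset.mem_insert.mpr (Or.inr (Finset.mem_singleton.mpr h))
              have hcard2 : ({i0, j} : Finset (Fin 9)).card ≤ 2 :=
                Finset.card_insert_le _ _ |>.trans (by simp)
              have hfeq : (Finset.univ.filter (fun k => s k = u)) = {i0, j} :=
                Finset.eq_of_subset_of_card_le hsubfil
                  (hcard2.trans (le_of_eq hmu2.symm))
              have : i0 ∈ Finset.univ.filter (fun k => s k = u) := by
                rw [hfeq]; exact Finset.mem_insert_self _ _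
              have : s i0 = u := (Finset.mem_filter.mp this).2
              exact hcase (by rw [← this, hsi0])
          calc w u = if u ∈ (edges18 j).erase (s j) then w u else 0 := by
                rw [if_pos (Finset.mem_erase.mpr ⟨Ne.symm hsju, huj⟩)]
            _ ≤ ∑ j' ∈ Finset.univ.erase i0, if u ∈ (edges18 j').erase (s j') then w u else 0 := by
                apply Finset.single_le_sum (f := fun j' =>
                  if u ∈ (edges18 j').erase (s j') then w u else 0)
                · intro j' _
                  split
                  · exact h0 u
                  · exact le_refl 0
                · exact Finset.mem_erase.mpr ⟨hji0, Finset.mem_univ j⟩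
        exact le_trans (le_of_eq (hnorm i0).symm) (Finset.sum_le_sum hper)
      exact hstep2.trans (Finset.sum_le_sum hstep1)
    have hsplitS : ∑ i, ∑ v ∈ (edges18 i).erase (s i), w v
        = (∑ v ∈ (edges18 i0).erase (s i0), w v)
          + ∑ j ∈ Finset.univ.erase i0, ∑ v ∈ (edges18 j).erase (s j), w v :=
      (Finset.add_sum_erase _ _ (Finset.mem_univ i0)).symm
    rw [htot, hsplitS, hslack0]
    linarith
  · -- L.card ≥ 3 case
    obtain ⟨t, htL, ht3⟩ := Finset.exists_subset_card_eq hc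
    obtain ⟨a, b, c, hab, hac, hbc, htabc⟩ := Finset.card_eq_three.mp ht3
    have hmem : ∀ x ∈ t, m x = 1 := fun x hx => (Finset.mem_filter.mp (htL hx)).2
    have hex : ∀ x ∈ t, ∃ i, s i = x := by
      intro x hx
      have : (Finset.univ.filter (fun i => s i = x)).Nonempty := by
        rw [← Finset.card_pos]
        show 0 < m x
        have := hmem x hx
        omega
      obtain ⟨i, hi⟩ := this
      exact ⟨i, (Finset.mem_filter.mp hi).2⟩
    obtain ⟨ia, hia⟩ := hex a (htabc ▸ by simp)
    obtain ⟨ib, hib⟩ := hex b (htabc ▸ by simp)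
    obtain ⟨ic, hic⟩ := hex c (htabc ▸ by simp)
    have hiab : ia ≠ ib := fun h => hab (by rw [← hia, ← hib, h])
    have hiac : ia ≠ ic := fun h => hac (by rw [← hia, ← hic, h])
    have hibc : ib ≠ ic := fun h => hbc (by rw [← hib, ← hic, h])
    have hwa : w (s ia) ≤ 1 / 2 := hia ▸ lonely a (hmem a (htabc ▸ by simp)) ia hia
    have hwb : w (s ib) ≤ 1 / 2 := hib ▸ lonely b (hmem b (htabc ▸ by simp)) ib hib
    have hwc : w (s ic) ≤ 1 / 2 := hic ▸ lonely c (hmem c (htabc ▸ by simp)) ic hic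
    set T : Finset (Fin 9) := {ia, ib, ic} with hT
    have hTcard : T.card = 3 := by
      rw [hT, Finset.card_insert_of_notMem (by simp [hiab, hiac]),
        Finset.card_insert_of_notMem (by simp [hibc]), Finset.card_singleton]
    have hsplit : ∑ i, w (s i) = ∑ i ∈ Finset.univ \ T, w (s i) + ∑ i ∈ T, w (s i) :=
      (Finset.sum_sdiff (Finset.subset_univ T)).symm
    have hTsum : ∑ i ∈ T, w (s i) ≤ 3 / 2 := by
      rw [hT, Finset.sum_insert (by simp [hiab, hiac]),
        Finset.sum_insert (by simp [hibc]), Finset.sum_singleton]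
      linarith
    have hrest : ∑ i ∈ Finset.univ \ T, w (s i) ≤ 6 := by
      have hcard : (Finset.univ \ T).card = 6 := by
        rw [Finset.card_sdiff_of_subset (Finset.subset_univ T), hTcard]
        simp
      calc ∑ i ∈ Finset.univ \ T, w (s i) ≤ (Finset.univ \ T).card • (1 : ℝ) :=
            Finset.sum_le_card_nsmul _ _ 1 (fun i _ => h1 (s i))
        _ = 6 := by rw [hcard]; norm_num
    linarith

theorem eighteen_ray_noncontextuality_inequality
    (Λ : Type*) [Fintype Λ]
    (w : Fin 18 → Λ → ℝ)
    (hw01 : ∀ κ l, w κ l ∈ Set.Icc (0 : ℝ) 1)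
    (hwnorm : ∀ i l, ∑ κ ∈ edges18 i, w κ l = 1)
    (μ : Fin 9 → Fin 18 → Λ → ℝ)
    (hμ : ∀ i, ∀ κ ∈ edges18 i, (∀ l, 0 ≤ μ i κ l) ∧ ∑ l, μ i κ l = 1)
    (ν : Λ → ℝ)
    (hν : ∀ i l, (1 / 4 : ℝ) * ∑ κ ∈ edges18 i, μ i κ l = ν l) :
    (1 / 36 : ℝ) * ∑ i, ∑ κ ∈ edges18 i, ∑ l, w κ l * μ i κ l ≤ 5 / 6 := by
  classical
  have key9 : ∀ l : Λ, ∑ i, ∑ κ ∈ edges18 i, w κ l * μ i κ l ≤ 30 * ν l := by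
    intro l
    have hν0 : 0 ≤ ν l := by
      rw [← hν 0 l]
      have h := Finset.sum_nonneg (fun κ hκ => (hμ 0 κ hκ).1 l)
      linarith
    obtain ⟨s, hs, hmax⟩ : ∃ s : Fin 9 → Fin 18, (∀ i, s i ∈ edges18 i) ∧
        ∀ i, ∀ v ∈ edges18 i, w v l ≤ w (s i) l := by
      have h := fun i : Fin 9 =>
        Finset.exists_max_image (edges18 i) (fun v => w v l) (edges18_ne i)
      choose s h1 h2 using h
      exact ⟨s, h1, h2⟩
    have hkey := key (fun v => w v l) (fun v => (hw01 v l).1) (fun v => (hw01 v l).2)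
      (fun i => hwnorm i l) s hs hmax
    have hsum4 : ∀ i : Fin 9, ∑ κ ∈ edges18 i, μ i κ l = 4 * ν l := by
      intro i; have := hν i l; linarith
    calc ∑ i, ∑ κ ∈ edges18 i, w κ l * μ i κ l
        ≤ ∑ i, ∑ κ ∈ edges18 i, w (s i) l * μ i κ l := by
          apply Finset.sum_le_sum
          intro i _
          apply Finset.sum_le_sum
          intro κ hκ
          exact mul_le_mul_of_nonneg_right (hmax i κ hκ) ((hμ i κ hκ).1 l)
      _ = ∑ i, w (s i) l * (4 * ν l) := by
          apply Finset.sum_congr rfl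
          intro i _
          rw [← Finset.mul_sum, hsum4 i]
      _ = (∑ i, w (s i) l) * (4 * ν l) := (Finset.sum_mul _ _ _).symm
      _ ≤ (15 / 2) * (4 * ν l) := by
          apply mul_le_mul_of_nonneg_right hkey
          positivity
      _ = 30 * ν l := by ring
  have hswap : ∑ i, ∑ κ ∈ edges18 i, ∑ l, w κ l * μ i κ l
      = ∑ l, ∑ i, ∑ κ ∈ edges18 i, w κ l * μ i κ l := by
    rw [show (∑ i, ∑ κ ∈ edges18 i, ∑ l, w κ l * μ i κ l)
        = ∑ i, ∑ l, ∑ κ ∈ edges18 i, w κ l * μ i κ l from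
      Finset.sum_congr rfl (fun i _ => Finset.sum_comm)]
    exact Finset.sum_comm
  have hνsum : ∑ l, ν l = 1 := by
    have h1 : ∑ l, ν l = ∑ l, (1 / 4 : ℝ) * ∑ κ ∈ edges18 0, μ 0 κ l :=
      Finset.sum_congr rfl (fun l _ => (hν 0 l).symm)
    rw [h1, ← Finset.mul_sum, Finset.sum_comm]
    have h2 : ∑ κ ∈ edges18 0, ∑ l, μ 0 κ l = 4 := by
      rw [Finset.sum_congr rfl (fun κ hκ => (hμ 0 κ hκ).2), Finset.sum_const,
        edges18_card 0]
      norm_num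
    rw [h2]
    norm_num
  have hbound : ∑ l, ∑ i, ∑ κ ∈ edges18 i, w κ l * μ i κ l ≤ 30 := by
    calc ∑ l, ∑ i, ∑ κ ∈ edges18 i, w κ l * μ i κ l
        ≤ ∑ l, 30 * ν l := Finset.sum_le_sum (fun l _ => key9 l)
      _ = 30 * ∑ l, ν l := by rw [Finset.mul_sum]
      _ = 30 := by rw [hνsum]; norm_num
  rw [hswap]
  linarith
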